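/- Let R be a commutative ring and A ∈ Mat_{m×m}(R) with det(A) not a zero divisor. Then Ann.Coker(A) = Ann.Coker(A^T), where A^T is the transpose. -/

import Mathlib

/-- `Ann.Coker(A) = Ann(R^m / A(R^m))`. -/
noncomputable def annCoker {R : Type*} [CommRing R] {m n : ℕ}
    (A : Matrix (Fin m) (Fin n) R) : Ideal R :=
  Module.annihilator R ((Fin m → R) ⧸ LinearMap.range A.mulVecLin)

lemma mem_annCoker_iff {R : Type*} [CommRing R] {m : ℕ}
    (A : Matrix (Fin m) (Fin m) R) (f : R) :
    f ∈ annCoker A ↔ ∃ B : Matrix (Fin m) (Fin m) R, A * B = f • 1 := by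
  constructor
  · intro hf
    have h : ∀ v : Fin m → R, ∃ w, A.mulVec w = f • v := by
      intro v
      have := (Module.mem_annihilator.mp hf)
        (Submodule.Quotient.mk (p := LinearMap.range A.mulVecLin) v)
      rw [← Submodule.Quotient.mk_smul, Submodule.Quotient.mk_eq_zero] at this
      exact this
    choose w hw using h
    refine ⟨Matrix.of fun i j => w (Pi.single j 1) i, ?_⟩
    ext i j
    have := congrFun (hw (Pi.single j 1)) i
    simpa [Matrix.mul_apply, Matrix.mulVec, dotProduct, Matrix.one_apply,
      Pi.single_apply, mul_comm] using this
  · rintro ⟨B, hB⟩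
    rw [annCoker]
    rw [Module.mem_annihilator]
    intro x
    obtain ⟨v, rfl⟩ := Submodule.Quotient.mk_surjective _ x
    rw [← Submodule.Quotient.mk_smul, Submodule.Quotient.mk_eq_zero]
    refine ⟨B.mulVec v, ?_⟩
    have : (A * B).mulVec v = f • v := by
      rw [hB]; ext i; simp [Matrix.mulVec, dotProduct, Matrix.one_apply,
        mul_comm]
    simpa [Matrix.mulVec_mulVec] using this

lemma swap_side {R : Type*} [CommRing R] {m : ℕ} (A B : Matrix (Fin m) (Fin m) R)
    (hdet : A.det ∈ nonZeroDivisors R) (f : R) (hB : A * B = f • 1) :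
    B * A = f • 1 := by
  have h1 : A.det • B = f • A.adjugate := by
    have := congrArg (A.adjugate * ·) hB
    simpa [← Matrix.mul_assoc, Matrix.adjugate_mul, Matrix.smul_mul,
      Matrix.mul_smul, Matrix.mul_one] using this
  have h2 : A.det • (B * A) = A.det • ((f : R) • (1 : Matrix (Fin m) (Fin m) R)) := by
    have := congrArg (· * A) h1
    simpa [Matrix.smul_mul, Matrix.adjugate_mul, smul_smul, mul_comm] using this
  ext i j
  have h3 := congrFun (congrFun h2 i) j
  simp only [Matrix.smul_apply, smul_eq_mul] at h3
  have h4 : ((B * A) i j - (f • (1 : Matrix (Fin m) (Fin m) R)) i j) * A.det = 0 := by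
    simp only [Matrix.smul_apply, smul_eq_mul]
    linear_combination h3
  have := hdet.2 _ h4
  exact sub_eq_zero.mp this

theorem stmt_9 {R : Type*} [CommRing R] {m : ℕ} (A : Matrix (Fin m) (Fin m) R)
    (hdet : A.det ∈ nonZeroDivisors R) :
    annCoker A = annCoker A.transpose := by
  have hdetT : A.transpose.det ∈ nonZeroDivisors R := by
    rwa [Matrix.det_transpose]
  ext f
  rw [mem_annCoker_iff, mem_annCoker_iff]
  constructor
  · rintro ⟨B, hB⟩
    refine ⟨B.transpose, ?_⟩
    have := swap_side A B hdet f hB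
    calc A.transpose * B.transpose = (B * A).transpose := by
          rw [Matrix.transpose_mul]
      _ = f • 1 := by rw [this, Matrix.transpose_smul, Matrix.transpose_one]
  · rintro ⟨B, hB⟩
    refine ⟨B.transpose, ?_⟩
    have := swap_side A.transpose B hdetT f hB
    calc A * B.transpose = (B * A.transpose).transpose := by
          rw [Matrix.transpose_mul, Matrix.transpose_transpose]
      _ = f • 1 := by rw [this, Matrix.transpose_smul, Matrix.transpose_one]
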